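/- For lattice paths in the type B_n digraph: if X = (a,b) lies strictly below the line x − y = 2n then the number of directed paths from X to the final vertex F = (1,2n) equals the sum over i from a to min(n, 2n−b) of [binomial(2n−a−b, 2n−i−b) − binomial(2n−a−b, 2n−i−a+1)], i.e., the total count of weakly-above-diagonal north-east lattice paths from (a,b) to the diagonal points (i, 2n−i) for i = 0,…,n. -/

import Mathlib

/-- A north-east unit step in the integer lattice. -/
def NEStep (p q : ℤ × ℤ) : Prop :=
  q = (p.1 + 1, p.2) ∨ q = (p.1, p.2 + 1)

/-- A north-east lattice path from `a` to `b` staying weakly above the diagonal `x = y`,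
represented as its (nonempty) list of lattice points. -/
def IsNEPathAbove (a b : ℤ × ℤ) (l : List (ℤ × ℤ)) : Prop :=
  l.head? = some a ∧ l.getLast? = some b ∧ l.Chain' NEStep ∧ ∀ p ∈ l, p.1 ≤ p.2

/-- The number of north-east lattice paths from `a` to `b` weakly above the diagonal. -/
noncomputable def latticeCount (a b : ℤ × ℤ) : ℕ :=
  Set.ncard {l : List (ℤ × ℤ) | IsNEPathAbove a b l}

/-- The binomial coefficient `C(n, k)` for integers, equal to `0` if `k < 0` or `k > n`. -/
def intChoose (n k : ℤ) : ℕ :=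
  if 0 ≤ k ∧ k ≤ n then n.toNat.choose k.toNat else 0

/-! Auxiliary definitions and lemmas -/


def neNext (p : ℤ × ℤ) (s : Bool) : ℤ × ℤ := if s then (p.1 + 1, p.2) else (p.1, p.2 + 1)

def pathOf (p : ℤ × ℤ) : List Bool → List (ℤ × ℤ)
  | [] => [p]
  | s :: rest => p :: pathOf (neNext p s) rest

lemma pathOf_ne_nil (p : ℤ × ℤ) (s : List Bool) : pathOf p s ≠ [] := by
  cases s <;> simp [pathOf]

lemma exists_steps (l : List (ℤ × ℤ)) (a : ℤ × ℤ) (h1 : l.head? = some a)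
    (h2 : l.Chain' NEStep) : ∃ s : List Bool, l = pathOf a s := by
  induction l generalizing a with
  | nil => simp at h1
  | cons x t ih =>
    simp at h1; subst h1
    cases t with
    | nil => exact ⟨[], rfl⟩
    | cons y t' =>
      have hstep : NEStep x y := (List.isChain_cons_cons.mp h2).1
      have hch : List.Chain' NEStep (y :: t') := (List.isChain_cons_cons.mp h2).2
      obtain ⟨s, hs⟩ := ih y rfl hch
      rcases hstep with h | h
      · exact ⟨true :: s, by simp [pathOf, neNext, ← h, hs]⟩
      · exact ⟨false :: s, by simp [pathOf, neNext, ← h, hs]⟩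

lemma pathOf_getLast (s : List Bool) (p q : ℤ × ℤ)
    (h : (pathOf p s).getLast? = some q) :
    p.1 ≤ q.1 ∧ p.2 ≤ q.2 ∧ q.1 + q.2 = p.1 + p.2 + s.length := by
  induction s generalizing p with
  | nil => simp [pathOf] at h; subst h; simp
  | cons b rest ih =>
    have hne := pathOf_ne_nil (neNext p b) rest
    have h' : (pathOf (neNext p b) rest).getLast? = some q := by
      rw [pathOf, List.getLast?_cons] at h
      cases e : (pathOf (neNext p b) rest).getLast? with
      | none => exact absurd (List.getLast?_eq_none_iff.mp e) hne
      | some x => rw [e] at h; simp at h; exact congrArg some h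
    have := ih (neNext p b) h'
    cases b <;> simp [neNext] at this <;> simp <;> omega

lemma paths_finite (a b : ℤ × ℤ) : {l : List (ℤ × ℤ) | IsNEPathAbove a b l}.Finite := by
  apply Set.Finite.subset
    (((List.finite_length_le Bool (b.1 + b.2 - a.1 - a.2).toNat).image (pathOf a)))
  rintro l ⟨h1, h2, h3, _⟩
  obtain ⟨s, rfl⟩ := exists_steps l a h1 h3
  refine ⟨s, ?_, rfl⟩
  have := pathOf_getLast s a b h2
  simp only [Set.mem_setOf_eq]
  omega

lemma latticeCount_eq_zero (a b : ℤ × ℤ)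
    (h : b.1 < a.1 ∨ b.2 < a.2 ∨ b.2 < b.1) : latticeCount a b = 0 := by
  have : {l : List (ℤ × ℤ) | IsNEPathAbove a b l} = ∅ := by
    ext l
    simp only [Set.mem_setOf_eq, Set.mem_empty_iff_false, iff_false]
    rintro ⟨h1, h2, h3, h4⟩
    obtain ⟨s, rfl⟩ := exists_steps l a h1 h3
    have hb := pathOf_getLast s a b h2
    have hmem : b ∈ pathOf a s := List.mem_of_getLast? h2
    have := h4 b hmem
    omega
  rw [latticeCount, this, Set.ncard_empty]

lemma latticeCount_self (a : ℤ × ℤ) (h : a.1 ≤ a.2) : latticeCount a a = 1 := by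
  have : {l : List (ℤ × ℤ) | IsNEPathAbove a a l} = {[a]} := by
    ext l
    simp only [Set.mem_setOf_eq, Set.mem_singleton_iff]
    constructor
    · rintro ⟨h1, h2, h3, _⟩
      obtain ⟨s, rfl⟩ := exists_steps l a h1 h3
      have hb := pathOf_getLast s a a h2
      have : s = [] := by
        have : s.length = 0 := by omega
        exact List.length_eq_zero_iff.mp this
      rw [this]; rfl
    · rintro rfl
      refine ⟨rfl, rfl, List.isChain_singleton a, ?_⟩
      intro p hp; simp at hp; subst hp; exact h
  rw [latticeCount, this, Set.ncard_singleton]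

lemma latticeCount_rec (a : ℤ × ℤ) (c d : ℤ) (hne : a ≠ (c, d)) (hcd : c ≤ d) :
    latticeCount a (c, d) = latticeCount a (c - 1, d) + latticeCount a (c, d - 1) := by
  classical
  have key : {l | IsNEPathAbove a (c, d) l} =
      (fun l => l ++ [((c : ℤ), (d : ℤ))]) '' {l | IsNEPathAbove a (c - 1, d) l} ∪
      (fun l => l ++ [((c : ℤ), (d : ℤ))]) '' {l | IsNEPathAbove a (c, d - 1) l} := by
    ext l
    simp only [Set.mem_setOf_eq, Set.mem_union, Set.mem_image]
    constructor
    · rintro ⟨h1, h2, h3, h4⟩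
      obtain ⟨t, rfl⟩ := List.getLast?_eq_some_iff.1 h2
      have htne : t ≠ [] := by
        rintro rfl
        simp at h1
        exact hne h1.symm
      rw [List.Chain', List.isChain_append] at h3
      obtain ⟨hc1, _, hc3⟩ := h3
      obtain ⟨q, hq⟩ : ∃ q, t.getLast? = some q := by
        cases e2 : t.getLast? with
        | none => exact absurd (List.getLast?_eq_none_iff.mp e2) htne
        | some x => exact ⟨x, rfl⟩
      have hstep : NEStep q (c, d) := hc3 q hq (c, d) rfl
      have hhead : t.head? = some a := by
        cases t with
        | nil => exact absurd rfl htne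
        | cons x t' => simp at h1 ⊢; simpa using h1
      have hdiag : ∀ p ∈ t, p.1 ≤ p.2 := fun p hp => h4 p (by simp [hp])
      obtain ⟨q1, q2⟩ := q
      rcases hstep with h | h
      · left
        refine ⟨t, ⟨hhead, ?_, hc1, hdiag⟩, rfl⟩
        rw [hq]
        simp only [Prod.ext_iff] at h ⊢
        simp at h ⊢
        omega
      · right
        refine ⟨t, ⟨hhead, ?_, hc1, hdiag⟩, rfl⟩
        rw [hq]
        simp only [Prod.ext_iff] at h ⊢
        simp at h ⊢
        omega
    · have build : ∀ (q : ℤ × ℤ) (t : List (ℤ × ℤ)), NEStep q (c, d) →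
          IsNEPathAbove a q t → IsNEPathAbove a (c, d) (t ++ [(c, d)]) := by
        rintro q t hstep ⟨h1, h2, h3, h4⟩
        have htne : t ≠ [] := by rintro rfl; simp at h1
        refine ⟨?_, List.getLast?_concat, ?_, ?_⟩
        · cases t with
          | nil => exact absurd rfl htne
          | cons x t' => simpa using h1
        · rw [List.Chain', List.isChain_append]
          refine ⟨h3, List.isChain_singleton _, ?_⟩
          intro x hx y hy
          simp at hy
          subst hy
          rw [h2] at hx
          simp at hx
          subst hx
          exact hstep
        · intro p hp
          rcases List.mem_append.mp hp with hp | hp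
          · exact h4 p hp
          · simp at hp; subst hp; exact hcd
      rintro (⟨t, ht, rfl⟩ | ⟨t, ht, rfl⟩)
      · exact build _ t (Or.inl (by simp [Prod.ext_iff])) ht
      · exact build _ t (Or.inr (by simp [Prod.ext_iff])) ht
  have hdisj : Disjoint
      ((fun l => l ++ [((c : ℤ), (d : ℤ))]) '' {l | IsNEPathAbove a (c - 1, d) l})
      ((fun l => l ++ [((c : ℤ), (d : ℤ))]) '' {l | IsNEPathAbove a (c, d - 1) l}) := by
    rw [Set.disjoint_left]
    rintro l ⟨t1, ⟨_, hl1, _, _⟩, rfl⟩ ⟨t2, ⟨_, hl2, _, _⟩, hl⟩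
    have : t2 = t1 := List.append_left_injective _ hl
    subst this
    rw [hl1] at hl2
    simp [Prod.ext_iff] at hl2
  rw [latticeCount, key,
    Set.ncard_union_eq hdisj ((paths_finite _ _).image _) ((paths_finite _ _).image _),
    Set.ncard_image_of_injective _ (List.append_left_injective _),
    Set.ncard_image_of_injective _ (List.append_left_injective _)]
  rfl

lemma intChoose_neg (n k : ℤ) (h : k < 0) : intChoose n k = 0 := by
  unfold intChoose; rw [if_neg]; omega

lemma intChoose_gt (n k : ℤ) (h : n < k) : intChoose n k = 0 := by
  unfold intChoose; rw [if_neg]; omega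

lemma intChoose_zero_right (n : ℤ) (h : 0 ≤ n) : intChoose n 0 = 1 := by
  unfold intChoose; rw [if_pos ⟨le_refl 0, h⟩]; simp

lemma intChoose_symm (n k : ℤ) (h0 : 0 ≤ k) (hkn : k ≤ n) :
    intChoose n k = intChoose n (n - k) := by
  unfold intChoose
  rw [if_pos ⟨h0, hkn⟩, if_pos ⟨by omega, by omega⟩]
  rw [← Nat.choose_symm (show k.toNat ≤ n.toNat by omega)]
  congr 1
  omega

lemma intChoose_pascal (n k : ℤ) (hn : 1 ≤ n) :
    (intChoose n k : ℤ) = intChoose (n - 1) (k - 1) + intChoose (n - 1) k := by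
  rcases lt_trichotomy k 0 with hk | hk | hk
  · rw [intChoose_neg n k hk, intChoose_neg _ _ (by omega), intChoose_neg _ _ hk]
    simp
  · subst hk
    rw [intChoose_zero_right n (by omega), intChoose_neg _ _ (by omega),
      intChoose_zero_right _ (by omega)]
    simp
  · by_cases hkn : k ≤ n
    · unfold intChoose
      rw [if_pos ⟨by omega, hkn⟩]
      have h1 : n.toNat = (n - 1).toNat + 1 := by omega
      have h2 : k.toNat = (k - 1).toNat + 1 := by omega
      rw [h1, h2, Nat.choose_succ_succ]
      by_cases hkn' : k ≤ n - 1
      · rw [if_pos ⟨(by omega : (0:ℤ) ≤ k - 1), (by omega : k - 1 ≤ n - 1)⟩,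
          if_pos ⟨(by omega : (0:ℤ) ≤ k), (by omega : k ≤ n - 1)⟩]
        have h3 : (k - 1).toNat.succ = k.toNat := by omega
        rw [h3]
        have h4 : (k - 1).toNat + 1 = k.toNat := by omega
        rw [h4]
        push_cast
        ring
      · -- k = n
        rw [if_pos ⟨by omega, by omega⟩, if_neg (by omega)]
        have h3 : ((n - 1).toNat).choose ((k - 1).toNat + 1) = 0 :=
          Nat.choose_eq_zero_of_lt (by omega)
        rw [h3]
        push_cast
        ring
    · rw [intChoose_gt n k (by omega), intChoose_gt _ _ (by omega),
        intChoose_gt _ _ (by omega)]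
      simp

lemma count_formula : ∀ (m : ℕ) (a b c d : ℤ), a ≤ b → c + d = a + b + m →
    (latticeCount (a, b) (c, d) : ℤ) =
      if a ≤ c ∧ b ≤ d ∧ c ≤ d then
        (intChoose (c + d - a - b) (c - a) : ℤ) - intChoose (c + d - a - b) (c - b - 1)
      else 0 := by
  intro m
  induction m with
  | zero =>
    intro a b c d hab hsum
    simp only [Nat.cast_zero, add_zero] at hsum
    by_cases hcond : a ≤ c ∧ b ≤ d ∧ c ≤ d
    · obtain ⟨h1, h2, h3⟩ := hcond
      have hc : c = a := by omega
      have hd : d = b := by omega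
      rw [hc, hd, if_pos ⟨le_refl a, le_refl b, hab⟩, latticeCount_self (a, b) hab]
      rw [show a + b - a - b = 0 by ring, show a - a = 0 by ring,
        intChoose_zero_right 0 le_rfl, intChoose_neg 0 (a - b - 1) (by omega)]
      simp
    · rw [if_neg hcond]
      have hz : latticeCount (a, b) (c, d) = 0 := by
        apply latticeCount_eq_zero
        show c < a ∨ d < b ∨ d < c
        omega
      rw [hz]; simp
  | succ m ih =>
    intro a b c d hab hsum
    by_cases hcond : a ≤ c ∧ b ≤ d ∧ c ≤ d
    · obtain ⟨h1, h2, h3⟩ := hcond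
      have hne : ((a : ℤ), (b : ℤ)) ≠ (c, d) := by
        intro h
        rw [Prod.mk.injEq] at h
        omega
      rw [if_pos ⟨h1, h2, h3⟩, latticeCount_rec (a, b) c d hne h3]
      push_cast
      rw [ih a b (c - 1) d hab (by push_cast at hsum ⊢; omega),
        ih a b c (d - 1) hab (by push_cast at hsum ⊢; omega)]
      have hm : c + d = a + b + (m + 1) := by push_cast at hsum; omega
      have e1 : c - 1 + d - a - b = c + d - a - b - 1 := by ring
      have e2 : c - 1 - a = c - a - 1 := by ring
      have e3 : c - 1 - b - 1 = c - b - 2 := by ring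
      have e4 : c + (d - 1) - a - b = c + d - a - b - 1 := by ring
      rw [e1, e2, e3, e4]
      have hp1 := intChoose_pascal (c + d - a - b) (c - a) (by omega)
      have hp2 := intChoose_pascal (c + d - a - b) (c - b - 1) (by omega)
      rw [show c - b - 1 - 1 = c - b - 2 by ring] at hp2
      by_cases hca : a ≤ c - 1
      · by_cases hd1 : b ≤ d - 1 ∧ c ≤ d - 1
        · rw [if_pos ⟨hca, h2, by omega⟩, if_pos ⟨h1, hd1.1, hd1.2⟩]
          linarith
        · rw [if_pos ⟨hca, h2, by omega⟩,
            if_neg (fun h => hd1 ⟨h.2.1, h.2.2⟩)]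
          have hz : (intChoose (c + d - a - b - 1) (c - a) : ℤ) =
              intChoose (c + d - a - b - 1) (c - b - 1) := by
            rcases (by omega : d = b ∨ (b + 1 ≤ d ∧ c = d)) with hdb | ⟨hbd, hcd2⟩
            · rw [intChoose_gt _ _ (by omega), intChoose_neg _ _ (by omega)]
            · rw [intChoose_symm (c + d - a - b - 1) (c - a) (by omega) (by omega),
                show c + d - a - b - 1 - (c - a) = c - b - 1 by omega]
          linarith
      · have hceq : c = a := by omega
        rw [if_neg (fun h => absurd h.1 hca), if_pos ⟨h1, by omega, by omega⟩]
        have hz1 : intChoose (c + d - a - b - 1) (c - a - 1) = 0 :=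
          intChoose_neg _ _ (by omega)
        have hz2 : intChoose (c + d - a - b - 1) (c - b - 2) = 0 :=
          intChoose_neg _ _ (by omega)
        have hz1' : (intChoose (c + d - a - b - 1) (c - a - 1) : ℤ) = 0 := by
          exact_mod_cast congrArg Nat.cast hz1
        have hz2' : (intChoose (c + d - a - b - 1) (c - b - 2) : ℤ) = 0 := by
          exact_mod_cast congrArg Nat.cast hz2
        linarith
    · rw [if_neg hcond]
      have hz : latticeCount (a, b) (c, d) = 0 := by
        apply latticeCount_eq_zero
        show c < a ∨ d < b ∨ d < c
        omega
      rw [hz]; simp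

lemma intChoose_natCast (M k : ℕ) : intChoose (M : ℤ) (k : ℤ) = M.choose k := by
  unfold intChoose
  by_cases h : k ≤ M
  · rw [if_pos ⟨Int.natCast_nonneg k, by exact_mod_cast h⟩]
    simp
  · rw [if_neg (by omega), Nat.choose_eq_zero_of_lt (by omega)]


/-- Type `Bₙ` digraph counting: if `X = (a,b)` is weakly above the diagonal and lies
strictly below the line of the diagonal points `(i, 2n−i)`, then the total number of
weakly-above-diagonal north-east lattice paths from `(a,b)` to the diagonal points
`(i, 2n−i)`, `i = 0, …, n`, equals
`Σ_{i=a}^{min(n, 2n−b)} [C(2n−a−b, 2n−i−b) − C(2n−a−b, 2n−i−a+1)]`. -/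
theorem stmt11 (n a b : ℕ) (hab : a ≤ b) (hbelow : a + b < 2 * n) :
    (∑ i ∈ Finset.range (n + 1),
        (latticeCount ((a : ℤ), (b : ℤ)) ((i : ℤ), 2 * (n : ℤ) - (i : ℤ)) : ℤ)) =
      ∑ i ∈ Finset.Icc a (min n (2 * n - b)),
        ((Nat.choose (2 * n - a - b) (2 * n - i - b) : ℤ) -
          (Nat.choose (2 * n - a - b) (2 * n - i - a + 1) : ℤ)) := by
  have key : ∀ i ∈ Finset.range (n + 1),
      (latticeCount ((a : ℤ), (b : ℤ)) ((i : ℤ), 2 * (n : ℤ) - (i : ℤ)) : ℤ) =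
      if a ≤ i ∧ i ≤ 2 * n - b then
        ((Nat.choose (2 * n - a - b) (2 * n - i - b) : ℤ) -
          (Nat.choose (2 * n - a - b) (2 * n - i - a + 1) : ℤ))
      else 0 := by
    intro i hi
    rw [Finset.mem_range] at hi
    have hin : i ≤ n := by omega
    rw [count_formula (2 * n - a - b) (a : ℤ) (b : ℤ) (i : ℤ) (2 * (n : ℤ) - i)
      (by exact_mod_cast hab) (by omega)]
    by_cases hcnd : a ≤ i ∧ i ≤ 2 * n - b
    · rw [if_pos (by omega : (a : ℤ) ≤ i ∧ (b : ℤ) ≤ 2 * (n : ℤ) - i ∧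
        (i : ℤ) ≤ 2 * (n : ℤ) - i), if_pos hcnd]
      obtain ⟨hai, hib⟩ := hcnd
      have harg : (i : ℤ) + (2 * (n : ℤ) - i) - a - b = ((2 * n - a - b : ℕ) : ℤ) := by
        omega
      rw [harg]
      congr 1
      · rw [show (i : ℤ) - a = ((i - a : ℕ) : ℤ) by omega, intChoose_natCast]
        rw [← Nat.choose_symm (show i - a ≤ 2 * n - a - b by omega),
          show 2 * n - a - b - (i - a) = 2 * n - i - b by omega]
      · by_cases hbi : b < i
        · rw [show (i : ℤ) - b - 1 = ((i - b - 1 : ℕ) : ℤ) by omega, intChoose_natCast]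
          rw [← Nat.choose_symm (show i - b - 1 ≤ 2 * n - a - b by omega),
            show 2 * n - a - b - (i - b - 1) = 2 * n - i - a + 1 by omega]
        · rw [intChoose_neg _ _ (by omega), Nat.choose_eq_zero_of_lt (by omega)]
    · rw [if_neg (by omega : ¬((a : ℤ) ≤ i ∧ (b : ℤ) ≤ 2 * (n : ℤ) - i ∧
        (i : ℤ) ≤ 2 * (n : ℤ) - i)), if_neg hcnd]
  rw [Finset.sum_congr rfl key, ← Finset.sum_filter]
  apply Finset.sum_congr _ (fun _ _ => rfl)
  ext j
  simp only [Finset.mem_filter, Finset.mem_range, Finset.mem_Icc, le_min_iff]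
  omega
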